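/- arXiv:2507.22739 — 4 statements merged into one kernel-verified Lean document; each statement's English description precedes it below -/
import Mathlib

section
/- Let X be a uniformly convex, uniformly smooth real Banach space, x ∈ X with ‖x‖ = 1, and let H₋(Jx) = {y ∈ X : ⟨Jx, y⟩ ≤ 0} be the closed halfspace determined by the duality map at x. Then the polar of the halfspace H₋(Jx) (as a closed convex cone) is exactly the ray {t·x : t ≥ 0}. -/
/-- A real normed space is uniformly smooth. -/
def UniformlySmooth (X : Type*) [NormedAddCommGroup X] [NormedSpace ℝ X] : Prop :=
  ∀ ε : ℝ, 0 < ε → ∃ δ : ℝ, 0 < δ ∧ ∀ x y : X, ‖x‖ = 1 → ‖y‖ ≤ δ →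
    ‖x + y‖ + ‖x - y‖ ≤ 2 + ε * ‖y‖

/-- In a strictly convex space, a norm-one functional attains its norm at a unique unit vector. -/
lemma unique_norming {X : Type*} [NormedAddCommGroup X] [NormedSpace ℝ X]
    [StrictConvexSpace ℝ X] (f : StrongDual ℝ X) (hf : ‖f‖ = 1)
    (u x : X) (hu : ‖u‖ = 1) (hxn : ‖x‖ = 1) (hfu : f u = 1) (hfx : f x = 1) : u = x := by
  have h2 : f (u + x) = 2 := by rw [map_add, hfu, hfx]; norm_num
  have hle : (2 : ℝ) ≤ ‖u + x‖ := by
    calc (2 : ℝ) = f (u + x) := h2.symm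
    _ ≤ ‖f (u + x)‖ := le_abs_self _
    _ ≤ ‖f‖ * ‖u + x‖ := f.le_opNorm _
    _ = ‖u + x‖ := by rw [hf, one_mul]
  have hge : ‖u + x‖ ≤ 2 := by
    calc ‖u + x‖ ≤ ‖u‖ + ‖x‖ := norm_add_le _ _
    _ = 2 := by rw [hu, hxn]; norm_num
  exact eq_of_norm_eq_of_norm_add_eq (hu.trans hxn.symm)
    (by rw [le_antisymm hge hle, hu, hxn]; norm_num)

/-- In a uniformly convex, uniformly smooth real Banach space, the polar of the
halfspace `H₋(Jx) = {y | ⟨Jx, y⟩ ≤ 0}` (where `‖x‖ = 1`) is exactly the ray `{t • x | t ≥ 0}`. -/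
theorem polar_halfspace_eq_ray {X : Type*} [NormedAddCommGroup X] [NormedSpace ℝ X]
    [CompleteSpace X] [UniformConvexSpace X] (hsm : UniformlySmooth X)
    (J : X → StrongDual ℝ X)
    (hJ : ∀ x : X, J x x = ‖x‖ ^ 2 ∧ ‖J x‖ = ‖x‖)
    (x : X) (hx : ‖x‖ = 1)
    (P : X → X)
    (hP : ∀ y : X, P y ∈ {z : X | J x z ≤ 0} ∧ ∀ z ∈ {z : X | J x z ≤ 0}, ‖y - P y‖ ≤ ‖y - z‖) :
    {y | P y = 0} = {y : X | ∃ t : ℝ, 0 ≤ t ∧ y = t • x} := by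
  set f := J x with hf
  have hfx : f x = 1 := by rw [hf, (hJ x).1, hx]; norm_num
  have hfnorm : ‖f‖ = 1 := by rw [hf, (hJ x).2, hx]
  have hfle : ∀ z : X, f z ≤ ‖z‖ := fun z => by
    calc f z ≤ ‖f z‖ := le_abs_self _
    _ ≤ ‖f‖ * ‖z‖ := f.le_opNorm z
    _ = ‖z‖ := by rw [hfnorm, one_mul]
  ext y
  simp only [Set.mem_setOf_eq]
  constructor
  · intro hy
    have hnear : ∀ z : X, f z ≤ 0 → ‖y‖ ≤ ‖y - z‖ := by
      intro z hz
      have := (hP y).2 z hz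
      rwa [hy, sub_zero] at this
    by_cases hfy : f y ≤ 0
    · have := hnear y hfy
      rw [sub_self, norm_zero] at this
      exact ⟨0, le_refl 0, by rw [zero_smul, norm_le_zero_iff.mp this]⟩
    · push_neg at hfy
      have hz : f (y - f y • x) ≤ 0 := by
        rw [map_sub, map_smul, smul_eq_mul, hfx, mul_one, sub_self]
      have h1 : ‖y‖ ≤ f y := by
        have := hnear _ hz
        rwa [sub_sub_cancel, norm_smul, Real.norm_eq_abs, abs_of_pos hfy, hx, mul_one] at this
      have heq : f y = ‖y‖ := le_antisymm (hfle y) h1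
      have hy0 : 0 < ‖y‖ := heq ▸ hfy
      have hu : (‖y‖⁻¹ • y) = x := by
        refine unique_norming f hfnorm _ x ?_ hx ?_ hfx
        · rw [norm_smul, Real.norm_eq_abs, abs_of_pos (inv_pos.mpr hy0),
            inv_mul_cancel₀ hy0.ne']
        · rw [map_smul, smul_eq_mul, heq, inv_mul_cancel₀ hy0.ne']
      exact ⟨‖y‖, hy0.le, by rw [← hu, smul_smul, mul_inv_cancel₀ hy0.ne', one_smul]⟩
  · rintro ⟨t, ht, rfl⟩
    have h0mem : f (0 : X) ≤ 0 := by simp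
    have hle : ‖t • x - P (t • x)‖ ≤ t := by
      have := (hP (t • x)).2 0 h0mem
      rwa [sub_zero, norm_smul, Real.norm_eq_abs, abs_of_nonneg ht, hx, mul_one] at this
    rcases eq_or_lt_of_le ht with h | ht'
    · have : ‖(0:X) - P 0‖ ≤ 0 := by simpa [← h] using hle
      rw [zero_sub, norm_neg] at this
      simpa [← h] using (norm_le_zero_iff.mp this)
    · have hfP : f (P (t • x)) ≤ 0 := (hP (t • x)).1
      have hfw : t ≤ f (t • x - P (t • x)) := by
        rw [map_sub, map_smul, smul_eq_mul, hfx, mul_one]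
        linarith
      have hwt : f (t • x - P (t • x)) = t := le_antisymm (le_trans (hfle _) hle) hfw
      have hwn : ‖t • x - P (t • x)‖ = t := by
        refine le_antisymm hle ?_
        calc t = f (t • x - P (t • x)) := hwt.symm
        _ ≤ ‖t • x - P (t • x)‖ := hfle _
      have hu : (t⁻¹ • (t • x - P (t • x))) = x := by
        refine unique_norming f hfnorm _ x ?_ hx ?_ hfx
        · rw [norm_smul, Real.norm_eq_abs, abs_of_pos (inv_pos.mpr ht'), hwn,
            inv_mul_cancel₀ ht'.ne']
        · rw [map_smul, smul_eq_mul, hwt, inv_mul_cancel₀ ht'.ne']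
      have : t • x - P (t • x) = t • x := by
        have := congrArg (t • ·) hu
        simpa [smul_smul, mul_inv_cancel₀ ht'.ne'] using this
      have := sub_eq_self.mp this
      simpa using this
end

section
/- Let X be a uniformly convex, uniformly smooth real Banach space with duality map J. Suppose that for every pair u, v ∈ X° of points in the polar of a closed convex cone K the segment [u,v] lies in the polar of the wedge generated by the duality images, i.e., suppose every wedge (intersection over an arc of dual unit vectors of halfspaces H₋(J*c)) has convex polar. Then every closed convex cone in X has convex polar. -/
/-- The polar of a closed convex cone `K`: the set of points whose metric projection onto `K`
is `0`, i.e. the points having `0` as a nearest point of `K`. -/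
def conePolar {X : Type*} [NormedAddCommGroup X] (K : Set X) : Set X :=
  {x | ∀ z ∈ K, ‖x‖ ≤ ‖x - z‖}

/-- The minor arc `δ(a,b)` of the dual meridian through `a` and `b`: unit functionals that are
nonnegative combinations of `a` and `b`. -/
def dualArc {X : Type*} [NormedAddCommGroup X] [NormedSpace ℝ X]
    (a b : StrongDual ℝ X) : Set (StrongDual ℝ X) :=
  {c | ‖c‖ = 1 ∧ ∃ l m : ℝ, 0 ≤ l ∧ 0 ≤ m ∧ c = l • a + m • b}

/-- The wedge engendered by the arc `δ(a,b)`: the intersection of the halfspaces `H₋(c)`. -/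
def wedge {X : Type*} [NormedAddCommGroup X] [NormedSpace ℝ X]
    (a b : StrongDual ℝ X) : Set X :=
  {x | ∀ c ∈ dualArc a b, c x ≤ 0}

lemma conePolar_smul_mem {X : Type*} [NormedAddCommGroup X] [NormedSpace ℝ X] {K : Set X}
    {u : X} (hu : u ∈ conePolar K) {r : ℝ} (hr0 : 0 ≤ r) (hr1 : r ≤ 1) :
    r • u ∈ conePolar K := by
  intro z hz
  have h1 : ‖u‖ ≤ ‖u - z‖ := hu z hz
  have h2 : ‖u - z‖ ≤ ‖u - r • u‖ + ‖r • u - z‖ := by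
    have := norm_add_le (u - r • u) (r • u - z)
    simpa using this
  have h3 : ‖u - r • u‖ = (1 - r) * ‖u‖ := by
    have h : u - r • u = (1 - r) • u := by module
    rw [h, norm_smul, Real.norm_eq_abs, abs_of_nonneg (by linarith)]
  have h4 : ‖r • u‖ = r * ‖u‖ := by
    rw [norm_smul, Real.norm_eq_abs, abs_of_nonneg hr0]
  rw [h4]; rw [h3] at h2; linarith

lemma exists_support {X : Type*} [NormedAddCommGroup X] [NormedSpace ℝ X] {K : Set X}
    (hK : Convex ℝ K) (h0 : (0 : X) ∈ K)
    (hcone : ∀ t : ℝ, 0 ≤ t → ∀ x ∈ K, t • x ∈ K)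
    {u : X} (hu : u ∈ conePolar K) (hu0 : u ≠ 0) :
    ∃ g : StrongDual ℝ X, ‖g‖ = 1 ∧ g u = ‖u‖ ∧ ∀ z ∈ K, g z ≤ 0 := by
  have hun : (0:ℝ) < ‖u‖ := norm_pos_iff.mpr hu0
  have hdisj : Disjoint (Metric.ball u ‖u‖) K := by
    rw [Set.disjoint_left]
    intro z hzb hzK
    have h1 : ‖u‖ ≤ ‖u - z‖ := hu z hzK
    have h2 : dist u z < ‖u‖ := by rwa [Metric.mem_ball, dist_comm] at hzb
    rw [dist_eq_norm] at h2; linarith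
  obtain ⟨f, c, hfb, hfK⟩ := geometric_hahn_banach_open (convex_ball u ‖u‖)
    Metric.isOpen_ball hK hdisj
  have hc0 : c ≤ 0 := by simpa using hfK 0 h0
  have hfu : f u < 0 := lt_of_lt_of_le (hfb u (by simpa [Metric.mem_ball] using hun)) hc0
  have hfK' : ∀ z ∈ K, 0 ≤ f z := by
    intro z hz
    by_contra hneg
    push_neg at hneg
    have ht : (0:ℝ) ≤ (c - 1) / f z := (div_pos_of_neg_of_neg (by linarith) hneg).le
    have h5 := hfK _ (hcone _ ht z hz)
    rw [map_smul, smul_eq_mul, div_mul_cancel₀ _ (ne_of_lt hneg)] at h5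
    linarith
  have hball : ∀ y : X, ‖y‖ < ‖u‖ → |f y| ≤ -f u := by
    intro y hy
    have h1 : f (u + y) < c := hfb _ (by simpa [Metric.mem_ball, dist_eq_norm] using hy)
    have h2 : f (u - y) < c := hfb _ (by
      simp only [Metric.mem_ball, dist_eq_norm]
      simpa [norm_sub_rev] using hy)
    rw [map_add] at h1; rw [map_sub] at h2
    rw [abs_le]; constructor <;> linarith
  have hnorm : ‖f‖ * ‖u‖ ≤ -f u := by
    rw [← le_div_iff₀ hun]
    refine le_of_forall_lt fun r hr => ?_
    obtain ⟨x, hx1, hx2⟩ := f.exists_lt_apply_of_lt_opNorm hr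
    have h3 : |f (‖u‖ • x)| ≤ -f u := by
      apply hball
      rw [norm_smul, Real.norm_eq_abs, abs_of_nonneg hun.le]
      nlinarith
    rw [map_smul, smul_eq_mul, abs_mul, abs_of_nonneg hun.le] at h3
    rw [lt_div_iff₀ hun]
    have hfx : ‖f x‖ = |f x| := Real.norm_eq_abs _
    nlinarith [norm_nonneg (f x)]
  have hnorm' : -f u ≤ ‖f‖ * ‖u‖ := by
    have h := f.le_opNorm u
    rw [Real.norm_eq_abs] at h
    have h2 : -f u ≤ |f u| := neg_le_abs _
    linarith
  have heq : -f u = ‖f‖ * ‖u‖ := le_antisymm hnorm' hnorm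
  have hfpos : (0:ℝ) < ‖f‖ := by
    rcases lt_or_eq_of_le (norm_nonneg f) with h | h
    · exact h
    · exfalso; rw [← h] at heq; simp at heq; linarith
  refine ⟨‖f‖⁻¹ • (-f), ?_, ?_, ?_⟩
  · rw [norm_smul, norm_neg, Real.norm_eq_abs, abs_of_nonneg (by positivity)]
    field_simp
  · simp only [ContinuousLinearMap.smul_apply, ContinuousLinearMap.neg_apply, smul_eq_mul]
    rw [← heq] at *
    field_simp
    linarith [heq]
  · intro z hz
    simp only [ContinuousLinearMap.smul_apply, ContinuousLinearMap.neg_apply, smul_eq_mul]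
    have h1 := hfK' z hz
    exact mul_nonpos_of_nonneg_of_nonpos (by positivity) (by linarith)

lemma same_dir {X : Type*} [NormedAddCommGroup X] [NormedSpace ℝ X] [StrictConvexSpace ℝ X]
    {g : StrongDual ℝ X} (hg : ‖g‖ = 1) {x y : X} (hx : g x = ‖x‖) (hy : g y = ‖y‖)
    (hx0 : x ≠ 0) (hy0 : y ≠ 0) : ‖y‖ • x = ‖x‖ • y := by
  have hxn : (0:ℝ) < ‖x‖ := norm_pos_iff.mpr hx0
  have hyn : (0:ℝ) < ‖y‖ := norm_pos_iff.mpr hy0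
  set a : X := ‖x‖⁻¹ • x with ha
  set b : X := ‖y‖⁻¹ • y with hb
  have hna : ‖a‖ = 1 := by
    rw [ha, norm_smul, Real.norm_eq_abs, abs_of_nonneg (by positivity)]
    exact inv_mul_cancel₀ (ne_of_gt hxn)
  have hnb : ‖b‖ = 1 := by
    rw [hb, norm_smul, Real.norm_eq_abs, abs_of_nonneg (by positivity)]
    exact inv_mul_cancel₀ (ne_of_gt hyn)
  have hga : g a = 1 := by
    rw [ha, map_smul, smul_eq_mul, hx]
    exact inv_mul_cancel₀ (ne_of_gt hxn)
  have hgb : g b = 1 := by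
    rw [hb, map_smul, smul_eq_mul, hy]
    exact inv_mul_cancel₀ (ne_of_gt hyn)
  have hab : ‖a + b‖ = ‖a‖ + ‖b‖ := by
    have h1 : ‖a + b‖ ≤ 2 := by
      have := norm_add_le a b
      rw [hna, hnb] at this; linarith
    have h2 : (2:ℝ) ≤ ‖a + b‖ := by
      have h3 := g.le_opNorm (a + b)
      rw [hg, one_mul, map_add, hga, hgb, Real.norm_eq_abs] at h3
      have : |(1:ℝ) + 1| = 2 := by norm_num
      linarith
    rw [hna, hnb]; linarith
  have hray : SameRay ℝ a b := sameRay_iff_norm_add.mpr hab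
  have hab' : a = b := by
    rcases hray with h | h | ⟨r, s, hr, hs, hrs⟩
    · exfalso; rw [h] at hna; simp at hna
    · exfalso; rw [h] at hnb; simp at hnb
    · have hn : r = s := by
        have h4 := congrArg norm hrs
        rw [norm_smul r a, norm_smul s b, Real.norm_eq_abs, Real.norm_eq_abs,
          abs_of_pos hr, abs_of_pos hs, hna, hnb, mul_one, mul_one] at h4
        exact h4
      subst hn
      exact smul_right_injective X (ne_of_gt hr) hrs
  have h5 : ‖x‖⁻¹ • x = ‖y‖⁻¹ • y := hab'
  have h6 := congrArg (fun w : X => (‖x‖ * ‖y‖) • w) h5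
  simp only [smul_smul] at h6
  rw [show ‖x‖ * ‖y‖ * ‖x‖⁻¹ = ‖y‖ by field_simp,
     show ‖x‖ * ‖y‖ * ‖y‖⁻¹ = ‖x‖ by field_simp] at h6
  exact h6

/-- In a uniformly convex, uniformly smooth real Banach space, if every wedge
has convex polar, then every closed convex cone has convex polar. -/
theorem convex_polar_of_wedges {X : Type*} [NormedAddCommGroup X] [NormedSpace ℝ X]
    [CompleteSpace X] [UniformConvexSpace X] (hsm : UniformlySmooth X)
    (hwedge : ∀ a b : StrongDual ℝ X, ‖a‖ = 1 → ‖b‖ = 1 → b ≠ a → b ≠ -a →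
      Convex ℝ (conePolar (wedge a b))) :
    ∀ K : Set X, IsClosed K → Convex ℝ K → (0 : X) ∈ K →
      (∀ t : ℝ, 0 ≤ t → ∀ x ∈ K, t • x ∈ K) → Convex ℝ (conePolar K) := by
  intro K hKcl hKconv h0K hKcone
  intro u hu v hv a b ha hb hab
  by_cases hu0 : u = 0
  · subst hu0
    simp only [smul_zero, zero_add]
    exact conePolar_smul_mem hv hb (by linarith)
  by_cases hv0 : v = 0
  · subst hv0
    simp only [smul_zero, add_zero]
    exact conePolar_smul_mem hu ha (by linarith)
  have hun : (0:ℝ) < ‖u‖ := norm_pos_iff.mpr hu0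
  have hvn : (0:ℝ) < ‖v‖ := norm_pos_iff.mpr hv0
  obtain ⟨ga, hga1, hgau, hgaK⟩ := exists_support hKconv h0K hKcone hu hu0
  obtain ⟨gb, hgb1, hgbv, hgbK⟩ := exists_support hKconv h0K hKcone hv hv0
  by_cases hba : gb = ga
  · -- same supporting functional: direct estimate
    subst hba
    intro z hz
    have h1 : gb (a • u + b • v - z) ≤ ‖a • u + b • v - z‖ := by
      have h := gb.le_opNorm (a • u + b • v - z)
      rw [hgb1, one_mul, Real.norm_eq_abs] at h
      exact (le_abs_self _).trans h
    have h2 : gb (a • u + b • v - z) = a * ‖u‖ + b * ‖v‖ - gb z := by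
      rw [map_sub, map_add, map_smul, map_smul, smul_eq_mul, smul_eq_mul, hgau, hgbv]
    have h3 : ‖a • u + b • v‖ ≤ a * ‖u‖ + b * ‖v‖ := by
      calc ‖a • u + b • v‖ ≤ ‖a • u‖ + ‖b • v‖ := norm_add_le _ _
        _ = a * ‖u‖ + b * ‖v‖ := by
            rw [norm_smul, norm_smul, Real.norm_eq_abs, Real.norm_eq_abs,
              abs_of_nonneg ha, abs_of_nonneg hb]
    have h4 := hgbK z hz
    linarith
  by_cases hbna : gb = -ga
  · -- antipodal functionals: by strict convexity u and v are opposite rays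
    have hgav : ga (-v) = ‖-v‖ := by
      rw [hbna] at hgbv
      simp only [ContinuousLinearMap.neg_apply] at hgbv
      rw [map_neg, norm_neg]
      linarith
    have hkey : ‖-v‖ • u = ‖u‖ • (-v) :=
      same_dir hga1 hgau hgav hu0 (neg_ne_zero.mpr hv0)
    rw [norm_neg] at hkey
    -- hkey : ‖v‖ • u = ‖u‖ • (-v)
    rcases le_or_gt (b * ‖v‖) (a * ‖u‖) with hcase | hcase
    · -- combination is a nonnegative multiple of u
      have h8 : ‖u‖ • v = (-‖v‖) • u := by
        rw [neg_smul, hkey, smul_neg, neg_neg]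
      have hvc : v = (-(‖v‖ / ‖u‖)) • u := by
        calc v = ‖u‖⁻¹ • (‖u‖ • v) := by
              rw [smul_smul, inv_mul_cancel₀ hun.ne', one_smul]
          _ = ‖u‖⁻¹ • ((-‖v‖) • u) := by rw [h8]
          _ = (-(‖v‖ / ‖u‖)) • u := by rw [smul_smul]; congr 1; field_simp
      have hw : a • u + b • v = (a - b * ‖v‖ / ‖u‖) • u := by
        conv_lhs => rw [hvc]
        rw [smul_smul, ← add_smul]; congr 1; ring
      rw [hw]
      apply conePolar_smul_mem hu
      · rw [sub_nonneg, div_le_iff₀ hun]; linarith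
      · have : (0:ℝ) ≤ b * ‖v‖ / ‖u‖ := by positivity
        linarith
    · -- combination is a nonnegative multiple of v
      have huc : u = (-(‖u‖ / ‖v‖)) • v := by
        have h8 : ‖v‖ • u = (-‖u‖) • v := by
          rw [neg_smul, hkey, smul_neg]
        calc u = ‖v‖⁻¹ • (‖v‖ • u) := by
              rw [smul_smul, inv_mul_cancel₀ hvn.ne', one_smul]
          _ = ‖v‖⁻¹ • ((-‖u‖) • v) := by rw [h8]
          _ = (-(‖u‖ / ‖v‖)) • v := by rw [smul_smul]; congr 1; field_simp
      have hw : a • u + b • v = (b - a * ‖u‖ / ‖v‖) • v := by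
        conv_lhs => rw [huc]
        rw [smul_smul, ← add_smul]; congr 1; ring
      rw [hw]
      apply conePolar_smul_mem hv
      · rw [sub_nonneg, div_le_iff₀ hvn]; nlinarith
      · have : (0:ℝ) ≤ a * ‖u‖ / ‖v‖ := by positivity
        linarith
  · -- main case: use the wedge hypothesis
    have hconv := hwedge ga gb hga1 hgb1 hba hbna
    have haArc : ga ∈ dualArc ga gb :=
      ⟨hga1, 1, 0, zero_le_one, le_refl 0, by simp⟩
    have hbArc : gb ∈ dualArc ga gb :=
      ⟨hgb1, 0, 1, le_refl 0, zero_le_one, by simp⟩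
    have huW : u ∈ conePolar (wedge ga gb) := by
      intro z hz
      have hz' : ga z ≤ 0 := hz ga haArc
      have h1 : ga (u - z) ≤ ‖u - z‖ := by
        have h := ga.le_opNorm (u - z)
        rw [hga1, one_mul, Real.norm_eq_abs] at h
        exact (le_abs_self _).trans h
      rw [map_sub, hgau] at h1
      linarith
    have hvW : v ∈ conePolar (wedge ga gb) := by
      intro z hz
      have hz' : gb z ≤ 0 := hz gb hbArc
      have h1 : gb (v - z) ≤ ‖v - z‖ := by
        have h := gb.le_opNorm (v - z)
        rw [hgb1, one_mul, Real.norm_eq_abs] at h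
        exact (le_abs_self _).trans h
      rw [map_sub, hgbv] at h1
      linarith
    have hKW : K ⊆ wedge ga gb := by
      intro z hz c hc
      obtain ⟨hc1, l, m, hl, hm, rfl⟩ := hc
      have h1 := hgaK z hz
      have h2 := hgbK z hz
      simp only [ContinuousLinearMap.add_apply, ContinuousLinearMap.smul_apply, smul_eq_mul]
      nlinarith
    have hmem := hconv huW hvW ha hb hab
    intro z hz
    exact hmem z (hKW hz)
end

section
/- Let X be a uniformly convex, uniformly smooth real Banach space with duality map J and inverse J*. Every closed convex cone in X has a convex polar if and only if J* maps every two-dimensional linear subspace of X* onto a two-dimensional linear subspace of X. -/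
section Helpers

variable {X : Type*} [NormedAddCommGroup X] [NormedSpace ℝ X]

/-- Scale-invariant version of uniform smoothness. -/
lemma hsm_scaled (hsm : UniformlySmooth X) {ε : ℝ} (hε : 0 < ε) :
    ∃ δ : ℝ, 0 < δ ∧ ∀ x y : X, x ≠ 0 → ‖y‖ ≤ δ * ‖x‖ →
      ‖x + y‖ + ‖x - y‖ ≤ 2 * ‖x‖ + ε * ‖y‖ := by
  obtain ⟨δ, hδ0, hδ⟩ := hsm ε hε
  refine ⟨δ, hδ0, fun x y hx hy => ?_⟩
  have hx0 : 0 < ‖x‖ := norm_pos_iff.mpr hx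
  set u : X := ‖x‖⁻¹ • x with hu
  set v : X := ‖x‖⁻¹ • y with hv
  have hun : ‖u‖ = 1 := by
    rw [hu, norm_smul, norm_inv, norm_norm, inv_mul_cancel₀ hx0.ne']
  have hvn : ‖v‖ ≤ δ := by
    have h1 : ‖v‖ = ‖x‖⁻¹ * ‖y‖ := by rw [hv, norm_smul, norm_inv, norm_norm]
    have h2 : ‖x‖⁻¹ * ‖y‖ ≤ ‖x‖⁻¹ * (δ * ‖x‖) :=
      mul_le_mul_of_nonneg_left hy (by positivity)
    have h3 : ‖x‖⁻¹ * (δ * ‖x‖) = δ := by field_simp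
    rw [h1]; rw [h3] at h2; exact h2
  have key := hδ u v hun hvn
  have h1 : ‖x‖ • (u + v) = x + y := by
    rw [smul_add, hu, hv, smul_smul, smul_smul, mul_inv_cancel₀ hx0.ne', one_smul, one_smul]
  have h2 : ‖x‖ • (u - v) = x - y := by
    rw [smul_sub, hu, hv, smul_smul, smul_smul, mul_inv_cancel₀ hx0.ne', one_smul, one_smul]
  have e1 : ‖x + y‖ = ‖x‖ * ‖u + v‖ := by
    rw [← h1, norm_smul, norm_norm]
  have e2 : ‖x - y‖ = ‖x‖ * ‖u - v‖ := by
    rw [← h2, norm_smul, norm_norm]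
  have e3 : ‖v‖ = ‖x‖⁻¹ * ‖y‖ := by
    rw [hv, norm_smul, norm_inv, norm_norm]
  rw [e1, e2]
  calc ‖x‖ * ‖u + v‖ + ‖x‖ * ‖u - v‖ = ‖x‖ * (‖u + v‖ + ‖u - v‖) := by ring
    _ ≤ ‖x‖ * (2 + ε * ‖v‖) := by
        apply mul_le_mul_of_nonneg_left key hx0.le
    _ = 2 * ‖x‖ + ε * ‖y‖ := by
        rw [e3]; field_simp

/-- Uniqueness of the support functional in a uniformly smooth space. -/
lemma support_unique (hsm : UniformlySmooth X) {x : X} {φ ψ : StrongDual ℝ X}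
    (hφ1 : φ x = ‖x‖ ^ 2) (hφ2 : ‖φ‖ = ‖x‖) (hψ1 : ψ x = ‖x‖ ^ 2) (hψ2 : ‖ψ‖ = ‖x‖) :
    φ = ψ := by
  rcases eq_or_ne x 0 with rfl | hx
  · have h1 : φ = 0 := by rw [← norm_eq_zero, hφ2, norm_zero]
    have h2 : ψ = 0 := by rw [← norm_eq_zero, hψ2, norm_zero]
    rw [h1, h2]
  · have key : ∀ φ ψ : StrongDual ℝ X, φ x = ‖x‖ ^ 2 → ‖φ‖ = ‖x‖ →
        ψ x = ‖x‖ ^ 2 → ‖ψ‖ = ‖x‖ → ∀ y : X, φ y ≤ ψ y := by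
      intro φ ψ hφ1 hφ2 hψ1 hψ2 y
      rcases eq_or_ne y 0 with rfl | hy
      · simp
      by_contra hlt
      push_neg at hlt
      have hd0 : 0 < φ y - ψ y := sub_pos.mpr hlt
      have hx0 : 0 < ‖x‖ := norm_pos_iff.mpr hx
      have hy0 : 0 < ‖y‖ := norm_pos_iff.mpr hy
      set ε : ℝ := (φ y - ψ y) / (2 * ‖x‖ * ‖y‖) with hε
      have hε0 : 0 < ε := by positivity
      obtain ⟨δ, hδ0, hδ⟩ := hsm_scaled hsm hε0
      set t : ℝ := δ * ‖x‖ / ‖y‖ with ht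
      have ht0 : 0 < t := by positivity
      have hnorm : ‖t • y‖ ≤ δ * ‖x‖ := by
        rw [norm_smul, Real.norm_eq_abs, abs_of_pos ht0, ht]
        rw [div_mul_eq_mul_div, mul_div_assoc, div_self hy0.ne', mul_one]
      have hbound := hδ x (t • y) hx hnorm
      have h1 : φ (x + t • y) ≤ ‖x‖ * ‖x + t • y‖ := by
        calc φ (x + t • y) ≤ |φ (x + t • y)| := le_abs_self _
          _ = ‖φ (x + t • y)‖ := (Real.norm_eq_abs _).symm
          _ ≤ ‖φ‖ * ‖x + t • y‖ := φ.le_opNorm _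
          _ = ‖x‖ * ‖x + t • y‖ := by rw [hφ2]
      have h2 : ψ (x - t • y) ≤ ‖x‖ * ‖x - t • y‖ := by
        calc ψ (x - t • y) ≤ |ψ (x - t • y)| := le_abs_self _
          _ = ‖ψ (x - t • y)‖ := (Real.norm_eq_abs _).symm
          _ ≤ ‖ψ‖ * ‖x - t • y‖ := ψ.le_opNorm _
          _ = ‖x‖ * ‖x - t • y‖ := by rw [hψ2]
      have e1 : φ (x + t • y) = ‖x‖ ^ 2 + t * φ y := by
        rw [map_add, map_smul, hφ1, smul_eq_mul]
      have e2 : ψ (x - t • y) = ‖x‖ ^ 2 - t * ψ y := by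
        rw [map_sub, map_smul, hψ1, smul_eq_mul]
      have e3 : ‖t • y‖ = t * ‖y‖ := by
        rw [norm_smul, Real.norm_eq_abs, abs_of_pos ht0]
      have hεt : ε * ‖t • y‖ = t * (φ y - ψ y) / (2 * ‖x‖) := by
        rw [e3, hε]; field_simp
      have hsum : ‖x‖ ^ 2 + t * φ y + (‖x‖ ^ 2 - t * ψ y) ≤
          ‖x‖ * (‖x + t • y‖ + ‖x - t • y‖) := by
        rw [mul_add, ← e1, ← e2]; linarith [h1, h2]
      have hmul := mul_le_mul_of_nonneg_left hbound hx0.le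
      have heq : ‖x‖ * (2 * ‖x‖ + ε * ‖t • y‖) = 2 * ‖x‖ ^ 2 + (t * φ y - t * ψ y) / 2 := by
        rw [hεt]; field_simp
      have hprod : 0 < t * φ y - t * ψ y := by nlinarith [mul_pos ht0 hd0]
      linarith [hsum, hmul, heq, hprod]
    ext y
    exact le_antisymm (key φ ψ hφ1 hφ2 hψ1 hψ2 y) (key ψ φ hψ1 hψ2 hφ1 hφ2 y)

end Helpers

section JBasics

variable {X : Type*} [NormedAddCommGroup X] [NormedSpace ℝ X]
variable {J : X → StrongDual ℝ X}

lemma J_eq (hsm : UniformlySmooth X) (hJ : ∀ x : X, J x x = ‖x‖ ^ 2 ∧ ‖J x‖ = ‖x‖)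
    {x : X} {φ : StrongDual ℝ X} (h1 : φ x = ‖x‖ ^ 2) (h2 : ‖φ‖ = ‖x‖) :
    φ = J x :=
  support_unique hsm h1 h2 (hJ x).1 (hJ x).2

lemma J_zero (hJ : ∀ x : X, J x x = ‖x‖ ^ 2 ∧ ‖J x‖ = ‖x‖) : J (0 : X) = 0 := by
  have := (hJ 0).2
  rw [norm_zero, norm_eq_zero] at this
  exact this

lemma J_smul (hsm : UniformlySmooth X) (hJ : ∀ x : X, J x x = ‖x‖ ^ 2 ∧ ‖J x‖ = ‖x‖)
    (c : ℝ) (x : X) : J (c • x) = c • J x := by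
  refine (J_eq hsm hJ ?_ ?_).symm
  · have h1 : (c • J x) (c • x) = c * (c * (J x x)) := by
      simp [ContinuousLinearMap.smul_apply, map_smul, smul_eq_mul]
    rw [h1, (hJ x).1, norm_smul, Real.norm_eq_abs, mul_pow]
    rw [sq_abs]
    ring
  · rw [norm_smul, norm_smul, (hJ x).2]

variable {Js : StrongDual ℝ X → X}

lemma Js_smul (hsm : UniformlySmooth X) (hJ : ∀ x : X, J x x = ‖x‖ ^ 2 ∧ ‖J x‖ = ‖x‖)
    (hJs : Function.LeftInverse Js J ∧ Function.RightInverse Js J)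
    (c : ℝ) (φ : StrongDual ℝ X) : Js (c • φ) = c • Js φ := by
  have h1 : c • φ = J (c • Js φ) := by
    rw [J_smul hsm hJ, hJs.2 φ]
  rw [h1, hJs.1]

lemma Js_zero (hJ : ∀ x : X, J x x = ‖x‖ ^ 2 ∧ ‖J x‖ = ‖x‖)
    (hJs : Function.LeftInverse Js J ∧ Function.RightInverse Js J) : Js 0 = (0 : X) := by
  have : Js (J 0) = (0 : X) := hJs.1 0
  rwa [J_zero hJ] at this

/-- Characterization of the polar via the duality map. -/
lemma mem_polar_iff (hsm : UniformlySmooth X) (hJ : ∀ x : X, J x x = ‖x‖ ^ 2 ∧ ‖J x‖ = ‖x‖)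
    {K : Set X} (hK : ∀ t : ℝ, 0 ≤ t → ∀ z ∈ K, t • z ∈ K) (x : X) :
    x ∈ conePolar K ↔ ∀ z ∈ K, J x z ≤ 0 := by
  constructor
  · intro hx z hz
    rcases eq_or_ne x 0 with rfl | hx0
    · rw [J_zero hJ]; simp
    rcases eq_or_ne z 0 with rfl | hz0
    · simp
    by_contra hpos
    push_neg at hpos
    have hxn : 0 < ‖x‖ := norm_pos_iff.mpr hx0
    have hzn : 0 < ‖z‖ := norm_pos_iff.mpr hz0
    set ε : ℝ := J x z / (2 * ‖x‖ * ‖z‖) with hε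
    have hε0 : 0 < ε := by positivity
    obtain ⟨δ, hδ0, hδ⟩ := hsm_scaled hsm hε0
    set t : ℝ := δ * ‖x‖ / ‖z‖ with ht
    have ht0 : 0 < t := by positivity
    have hnorm : ‖t • z‖ ≤ δ * ‖x‖ := by
      rw [norm_smul, Real.norm_eq_abs, abs_of_pos ht0, ht]
      rw [div_mul_eq_mul_div, mul_div_assoc, div_self hzn.ne', mul_one]
    have hbound := hδ x (t • z) hx0 hnorm
    have hlow : ‖x‖ ^ 2 + t * J x z ≤ ‖x‖ * ‖x + t • z‖ := by
      have h1 : J x (x + t • z) = ‖x‖ ^ 2 + t * J x z := by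
        rw [map_add, map_smul, (hJ x).1, smul_eq_mul]
      calc ‖x‖ ^ 2 + t * J x z = J x (x + t • z) := h1.symm
        _ ≤ |J x (x + t • z)| := le_abs_self _
        _ = ‖J x (x + t • z)‖ := (Real.norm_eq_abs _).symm
        _ ≤ ‖J x‖ * ‖x + t • z‖ := (J x).le_opNorm _
        _ = ‖x‖ * ‖x + t • z‖ := by rw [(hJ x).2]
    have hpol : ‖x‖ ≤ ‖x - t • z‖ := hx (t • z) (hK t ht0.le z hz)
    have hmul := mul_le_mul_of_nonneg_left hbound hxn.le
    have heq : ‖x‖ * (2 * ‖x‖ + ε * ‖t • z‖) = 2 * ‖x‖ ^ 2 + t * J x z / 2 := by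
      have e3 : ‖t • z‖ = t * ‖z‖ := by
        rw [norm_smul, Real.norm_eq_abs, abs_of_pos ht0]
      rw [e3, hε]; field_simp
    have hx2 : ‖x‖ * ‖x‖ = ‖x‖ ^ 2 := by ring
    have hmul2 : ‖x‖ * ‖x - t • z‖ ≥ ‖x‖ ^ 2 := by
      rw [← hx2]; exact mul_le_mul_of_nonneg_left hpol hxn.le
    have hprod : 0 < t * J x z := mul_pos ht0 hpos
    rw [mul_add] at hmul
    linarith [hmul, hlow, hmul2, heq, hprod]
  · intro h z hz
    rcases eq_or_ne ‖x‖ 0 with h0 | h0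
    · rw [h0]; exact norm_nonneg _
    have hxn : 0 < ‖x‖ := lt_of_le_of_ne (norm_nonneg _) (Ne.symm h0)
    have key : ‖x‖ ^ 2 ≤ ‖x‖ * ‖x - z‖ := by
      have h1 : J x x = J x (x - z) + J x z := by rw [← map_add]; congr 1; abel
      have h2 : J x (x - z) ≤ ‖x‖ * ‖x - z‖ := by
        calc J x (x - z) ≤ |J x (x - z)| := le_abs_self _
          _ = ‖J x (x - z)‖ := (Real.norm_eq_abs _).symm
          _ ≤ ‖J x‖ * ‖x - z‖ := (J x).le_opNorm _
          _ = ‖x‖ * ‖x - z‖ := by rw [(hJ x).2]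
      have h3 := h z hz
      rw [← (hJ x).1, h1]
      linarith
    nlinarith [key, hxn]

end JBasics

section MoreHelpers

variable {X : Type*} [NormedAddCommGroup X] [NormedSpace ℝ X]
variable {J : X → StrongDual ℝ X}

/-- The duality map is norm-to-norm continuous in a uniformly smooth space. -/
lemma J_cont (hsm : UniformlySmooth X) (hJ : ∀ x : X, J x x = ‖x‖ ^ 2 ∧ ‖J x‖ = ‖x‖) :
    Continuous J := by
  have key : ∀ ε : ℝ, 0 < ε → ∃ δ : ℝ, 0 < δ ∧ ∀ u v : X, ‖u‖ = 1 → ‖v‖ = 1 →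
      ‖J u - J v‖ ≤ ε + ‖u - v‖ / δ := by
    intro ε hε
    obtain ⟨δ, hδ0, hδ⟩ := hsm ε hε
    refine ⟨δ, hδ0, fun u v hu hv => ?_⟩
    have huJ : J u u = 1 := by rw [(hJ u).1, hu]; norm_num
    have hvJ : J v v = 1 := by rw [(hJ v).1, hv]; norm_num
    have hptwise : ∀ w : X, ‖w‖ = 1 → (J u - J v) w ≤ ε + ‖u - v‖ / δ := by
      intro w hw
      have h1 : 1 + δ * J u w ≤ ‖u + δ • w‖ := by
        have e : J u (u + δ • w) = 1 + δ * J u w := by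
          rw [map_add, map_smul, huJ, smul_eq_mul]
        calc 1 + δ * J u w = J u (u + δ • w) := e.symm
          _ ≤ |J u (u + δ • w)| := le_abs_self _
          _ = ‖J u (u + δ • w)‖ := (Real.norm_eq_abs _).symm
          _ ≤ ‖J u‖ * ‖u + δ • w‖ := (J u).le_opNorm _
          _ = ‖u + δ • w‖ := by rw [(hJ u).2, hu, one_mul]
      have h2 : 1 - δ * J v w ≤ ‖u - δ • w‖ + ‖u - v‖ := by
        have e : J v (v - δ • w) = 1 - δ * J v w := by
          rw [map_sub, map_smul, hvJ, smul_eq_mul]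
        have e2 : ‖v - δ • w‖ ≤ ‖u - δ • w‖ + ‖u - v‖ := by
          have : v - δ • w = (u - δ • w) - (u - v) := by abel
          rw [this]
          exact norm_sub_le _ _
        calc 1 - δ * J v w = J v (v - δ • w) := e.symm
          _ ≤ |J v (v - δ • w)| := le_abs_self _
          _ = ‖J v (v - δ • w)‖ := (Real.norm_eq_abs _).symm
          _ ≤ ‖J v‖ * ‖v - δ • w‖ := (J v).le_opNorm _
          _ = ‖v - δ • w‖ := by rw [(hJ v).2, hv, one_mul]
          _ ≤ ‖u - δ • w‖ + ‖u - v‖ := e2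
      have h3 : ‖u + δ • w‖ + ‖u - δ • w‖ ≤ 2 + ε * δ := by
        have hn : ‖δ • w‖ ≤ δ := by
          rw [norm_smul, Real.norm_eq_abs, abs_of_pos hδ0, hw, mul_one]
        have := hsm ε hε
        have h := hδ u (δ • w) hu hn
        have hn2 : ‖δ • w‖ = δ := by
          rw [norm_smul, Real.norm_eq_abs, abs_of_pos hδ0, hw, mul_one]
        rw [hn2] at h
        linarith
      have h4 : (J u - J v) w = J u w - J v w := by
        simp [ContinuousLinearMap.sub_apply]
      rw [h4]
      have h5 : δ * (J u w - J v w) ≤ ε * δ + ‖u - v‖ := by linarith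
      have h6 : J u w - J v w ≤ (ε * δ + ‖u - v‖) / δ := by
        rw [le_div_iff₀ hδ0, mul_comm]
        exact h5
      calc J u w - J v w ≤ (ε * δ + ‖u - v‖) / δ := h6
        _ = ε + ‖u - v‖ / δ := by
            rw [add_div, mul_div_assoc, div_self hδ0.ne', mul_one]
    have hM : (0 : ℝ) ≤ ε + ‖u - v‖ / δ := by positivity
    refine ContinuousLinearMap.opNorm_le_bound _ hM (fun w => ?_)
    rcases eq_or_ne w 0 with rfl | hw0
    · simp
    have hwn : 0 < ‖w‖ := norm_pos_iff.mpr hw0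
    set w' : X := ‖w‖⁻¹ • w with hw'
    have hw1 : ‖w'‖ = 1 := by
      rw [hw', norm_smul, norm_inv, norm_norm, inv_mul_cancel₀ hwn.ne']
    have hw2 : ‖(-1 : ℝ) • w'‖ = 1 := by rw [norm_smul]; simp [hw1]
    have hp1 := hptwise w' hw1
    have hp2 := hptwise ((-1 : ℝ) • w') hw2
    have hp2' : -((J u - J v) w') ≤ ε + ‖u - v‖ / δ := by
      rwa [map_smul, smul_eq_mul, neg_one_mul] at hp2
    have habs : |(J u - J v) w'| ≤ ε + ‖u - v‖ / δ := abs_le.mpr ⟨by linarith, hp1⟩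
    have hscale : (J u - J v) w = ‖w‖ * (J u - J v) w' := by
      rw [hw', map_smul, smul_eq_mul]
      field_simp
    rw [Real.norm_eq_abs, hscale, abs_mul, abs_of_pos hwn, mul_comm]
    exact mul_le_mul_of_nonneg_right habs hwn.le
  rw [continuous_iff_continuousAt]
  intro x₀
  rcases eq_or_ne x₀ 0 with rfl | hx₀
  · rw [ContinuousAt, J_zero hJ]
    rw [Metric.tendsto_nhds_nhds]
    intro ε hε
    refine ⟨ε, hε, fun {x} hx => ?_⟩
    rw [dist_eq_norm, sub_zero] at hx ⊢
    rw [(hJ x).2]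
    simpa using hx
  · have hxn : 0 < ‖x₀‖ := norm_pos_iff.mpr hx₀
    set n : X → X := fun x => ‖x‖⁻¹ • x with hn
    have hcn : ContinuousAt n x₀ :=
      ((continuous_norm.continuousAt).inv₀ hxn.ne').smul continuousAt_id
    have hnx₀ : ‖n x₀‖ = 1 := by
      rw [hn, norm_smul, norm_inv, norm_norm, inv_mul_cancel₀ hxn.ne']
    have hJS : ContinuousWithinAt J (Metric.sphere (0 : X) 1) (n x₀) := by
      rw [Metric.continuousWithinAt_iff]
      intro ε hε
      obtain ⟨δ, hδ0, hδ⟩ := key (ε / 2) (by linarith)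
      refine ⟨min 1 (ε * δ / 4), by positivity, fun {u} hu hd => ?_⟩
      have hu1 : ‖u‖ = 1 := by
        have := hu
        rw [Metric.mem_sphere, dist_eq_norm, sub_zero] at this
        exact this
      have hb := hδ u (n x₀) hu1 hnx₀
      rw [dist_eq_norm] at hd ⊢
      have hd2 : ‖u - n x₀‖ < ε * δ / 4 := lt_of_lt_of_le hd (min_le_right _ _)
      have h7 : ‖u - n x₀‖ / δ < ε / 4 := by
        rw [div_lt_iff₀ hδ0]
        calc ‖u - n x₀‖ < ε * δ / 4 := hd2
          _ = ε / 4 * δ := by ring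
      calc ‖J u - J (n x₀)‖ ≤ ε / 2 + ‖u - n x₀‖ / δ := hb
        _ < ε / 2 + ε / 4 := by linarith
        _ < ε := by linarith
    have hev : ∀ᶠ x in nhds x₀, n x ∈ Metric.sphere (0 : X) 1 := by
      have hopen : IsOpen {x : X | x ≠ 0} := isOpen_ne
      filter_upwards [hopen.mem_nhds hx₀] with x hx
      have hxn' : 0 < ‖x‖ := norm_pos_iff.mpr hx
      rw [Metric.mem_sphere, dist_eq_norm, sub_zero, hn]
      rw [norm_smul, norm_inv, norm_norm, inv_mul_cancel₀ hxn'.ne']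
    have htend : Filter.Tendsto n (nhds x₀) (nhdsWithin (n x₀) (Metric.sphere (0 : X) 1)) :=
      tendsto_nhdsWithin_iff.mpr ⟨hcn, hev⟩
    have hcomp : Filter.Tendsto (fun x => J (n x)) (nhds x₀) (nhds (J (n x₀))) :=
      hJS.tendsto.comp htend
    have hfull : ContinuousAt (fun x => ‖x‖ • J (n x)) x₀ :=
      (continuous_norm.continuousAt).smul hcomp
    apply hfull.congr
    have hopen : IsOpen {x : X | x ≠ 0} := isOpen_ne
    filter_upwards [hopen.mem_nhds hx₀] with x hx
    have hxn' : 0 < ‖x‖ := norm_pos_iff.mpr hx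
    have hxx : ‖x‖ • n x = x := by
      rw [hn, smul_smul, mul_inv_cancel₀ hxn'.ne', one_smul]
    rw [← J_smul hsm hJ, hxx]

end MoreHelpers

section LinAlgHelpers

lemma finrank_span_pair' {Y : Type*} [AddCommGroup Y] [Module ℝ Y] {u v : Y}
    (h : LinearIndependent ℝ ![u, v]) :
    Module.finrank ℝ (Submodule.span ℝ ({u, v} : Set Y)) = 2 := by
  have hr : ({u, v} : Set Y) = Set.range ![u, v] := by
    simp only [Matrix.range_cons, Matrix.range_empty, Set.singleton_union, Set.union_empty,
      Set.union_singleton]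
    exact Set.pair_comm u v
  rw [hr, finrank_span_eq_card h]
  simp

lemma pair_swap {Y : Type*} [AddCommGroup Y] [Module ℝ Y] {u v : Y}
    (h : LinearIndependent ℝ ![u, v]) : LinearIndependent ℝ ![v, u] := by
  rw [LinearIndependent.pair_iff] at h ⊢
  intro s t hst
  have := h t s (by rw [add_comm]; exact hst)
  exact ⟨this.2, this.1⟩

variable {X : Type*} [NormedAddCommGroup X] [NormedSpace ℝ X]

lemma exists_dual_elt {f g : StrongDual ℝ X} (h : LinearIndependent ℝ ![f, g]) :
    ∃ p : X, f p = 1 ∧ g p = 0 := by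
  rw [LinearIndependent.pair_iff] at h
  have hg : g ≠ 0 := by
    intro hg0
    have := h 0 1 (by rw [hg0]; simp)
    simp at this
  obtain ⟨z₁, hz₁⟩ : ∃ z₁, g z₁ ≠ 0 := by
    by_contra hc
    push_neg at hc
    exact hg (by ext z; simp [hc z])
  set z₂ : X := (g z₁)⁻¹ • z₁ with hz₂
  have hgz₂ : g z₂ = 1 := by
    rw [hz₂, map_smul, smul_eq_mul, inv_mul_cancel₀ hz₁]
  have hclaim : ∃ z, g z = 0 ∧ f z ≠ 0 := by
    by_contra hc
    push_neg at hc
    have hfg : ∀ z : X, f z = g z * f z₂ := by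
      intro z
      have hker : g (z - g z • z₂) = 0 := by
        rw [map_sub, map_smul, smul_eq_mul, hgz₂, mul_one, sub_self]
      have := hc (z - g z • z₂) hker
      rw [map_sub, map_smul, smul_eq_mul, sub_eq_zero] at this
      linarith [this]
    have hrel : (1 : ℝ) • f + (-(f z₂)) • g = 0 := by
      ext z
      simp only [ContinuousLinearMap.add_apply, ContinuousLinearMap.smul_apply,
        ContinuousLinearMap.zero_apply, smul_eq_mul, one_mul, neg_mul]
      rw [hfg z]; ring
    have := h 1 (-(f z₂)) hrel
    simp at this
  obtain ⟨z, hgz, hfz⟩ := hclaim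
  refine ⟨(f z)⁻¹ • z, ?_, ?_⟩
  · rw [map_smul, smul_eq_mul, inv_mul_cancel₀ hfz]
  · rw [map_smul, smul_eq_mul, hgz, mul_zero]

lemma exists_dual_pair {f g : StrongDual ℝ X} (h : LinearIndependent ℝ ![f, g]) :
    ∃ p q : X, f p = 1 ∧ g p = 0 ∧ f q = 0 ∧ g q = 1 := by
  obtain ⟨p, hp1, hp2⟩ := exists_dual_elt h
  obtain ⟨q, hq1, hq2⟩ := exists_dual_elt (pair_swap h)
  exact ⟨p, q, hp1, hp2, hq2, hq1⟩

end LinAlgHelpers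

section BasisPair

lemma exists_basis_pair {Y : Type*} [AddCommGroup Y] [Module ℝ Y] (D : Submodule ℝ Y)
    (hD2 : Module.finrank ℝ D = 2) :
    ∃ f g : Y, f ∈ D ∧ g ∈ D ∧ LinearIndependent ℝ ![f, g] ∧
      ∀ h ∈ D, ∃ α β : ℝ, h = α • f + β • g := by
  haveI : FiniteDimensional ℝ D := FiniteDimensional.of_finrank_eq_succ hD2
  let bD := Module.finBasisOfFinrankEq ℝ D hD2
  refine ⟨↑(bD 0), ↑(bD 1), (bD 0).2, (bD 1).2, ?_, ?_⟩
  · rw [LinearIndependent.pair_iff]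
    intro s t hst
    have h2 : s • bD 0 + t • bD 1 = 0 := by
      apply Subtype.coe_injective
      simp only [Submodule.coe_add, Submodule.coe_smul, ZeroMemClass.coe_zero]
      exact hst
    have h3 := Fintype.linearIndependent_iff.mp bD.linearIndependent ![s, t] ?_
    · exact ⟨h3 0, h3 1⟩
    · rw [Fin.sum_univ_two]
      simpa using h2
  · intro h hh
    refine ⟨bD.repr ⟨h, hh⟩ 0, bD.repr ⟨h, hh⟩ 1, ?_⟩
    have hsum : (bD.repr ⟨h, hh⟩ 0) • (bD 0) + (bD.repr ⟨h, hh⟩ 1) • (bD 1) = ⟨h, hh⟩ := by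
      rw [← Fin.sum_univ_two (f := fun i => bD.repr ⟨h, hh⟩ i • bD i)]
      exact bD.sum_repr _
    have hco := congrArg (fun v : D => (v : Y)) hsum
    simp only [Submodule.coe_add, Submodule.coe_smul] at hco
    exact hco.symm

end BasisPair

section Halfplane

variable {X : Type*} [NormedAddCommGroup X] [NormedSpace ℝ X]
variable {J : X → StrongDual ℝ X}

lemma halfplane_convex (hsm : UniformlySmooth X)
    (hJ : ∀ x : X, J x x = ‖x‖ ^ 2 ∧ ‖J x‖ = ‖x‖)
    (hLHS : ∀ K : Set X, IsClosed K → Convex ℝ K → (0 : X) ∈ K →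
        (∀ t : ℝ, 0 ≤ t → ∀ x ∈ K, t • x ∈ K) → Convex ℝ (conePolar K))
    {f₀ g₀ : StrongDual ℝ X} (hind : LinearIndependent ℝ ![f₀, g₀]) :
    Convex ℝ {x : X | ∃ α β : ℝ, 0 ≤ β ∧ J x = α • f₀ + β • g₀} := by
  obtain ⟨p, q, hp1, hp2, hq1, hq2⟩ := exists_dual_pair hind
  set K₀ : Set X := {z | f₀ z = 0 ∧ g₀ z ≤ 0} with hK₀
  have hscale : ∀ t : ℝ, 0 ≤ t → ∀ z ∈ K₀, t • z ∈ K₀ := by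
    rintro t ht z ⟨hz1, hz2⟩
    refine ⟨by rw [map_smul, smul_eq_mul, hz1, mul_zero], ?_⟩
    rw [map_smul, smul_eq_mul]
    exact mul_nonpos_of_nonneg_of_nonpos ht hz2
  have hclosed : IsClosed K₀ := by
    have h1 : IsClosed {z : X | f₀ z = 0} := isClosed_eq f₀.continuous continuous_const
    have h2 : IsClosed {z : X | g₀ z ≤ 0} := isClosed_le g₀.continuous continuous_const
    rw [hK₀, Set.setOf_and]
    exact h1.inter h2
  have hconvK : Convex ℝ K₀ := by
    rintro z₁ ⟨h11, h12⟩ z₂ ⟨h21, h22⟩ a b ha hb hab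
    constructor
    · show f₀ (a • z₁ + b • z₂) = 0
      rw [map_add, map_smul, map_smul, smul_eq_mul, smul_eq_mul, h11, h21]; ring
    · show g₀ (a • z₁ + b • z₂) ≤ 0
      rw [map_add, map_smul, map_smul, smul_eq_mul, smul_eq_mul]
      nlinarith
  have h0K : (0 : X) ∈ K₀ := ⟨map_zero f₀, le_of_eq (map_zero g₀)⟩
  have hconvP := hLHS K₀ hclosed hconvK h0K hscale
  have hset : conePolar K₀ = {x : X | ∃ α β : ℝ, 0 ≤ β ∧ J x = α • f₀ + β • g₀} := by
    ext x
    rw [Set.mem_setOf_eq, mem_polar_iff hsm hJ hscale]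
    constructor
    · intro hx
      have hqmem : -q ∈ K₀ := ⟨by rw [map_neg, hq1, neg_zero], by rw [map_neg, hq2]; linarith⟩
      have hβ : 0 ≤ J x q := by
        have := hx (-q) hqmem
        rw [map_neg] at this
        linarith
      refine ⟨J x p, J x q, hβ, ?_⟩
      ext z
      have hrz : f₀ (z - f₀ z • p - g₀ z • q) = 0 := by
        rw [map_sub, map_sub, map_smul, map_smul, smul_eq_mul, smul_eq_mul, hp1, hq1]; ring
      have hrz2 : g₀ (z - f₀ z • p - g₀ z • q) = 0 := by
        rw [map_sub, map_sub, map_smul, map_smul, smul_eq_mul, smul_eq_mul, hp2, hq2]; ring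
      have hmem1 : (z - f₀ z • p - g₀ z • q) ∈ K₀ := ⟨hrz, le_of_eq hrz2⟩
      have hmem2 : -(z - f₀ z • p - g₀ z • q) ∈ K₀ :=
        ⟨by rw [map_neg, hrz, neg_zero], by rw [map_neg, hrz2, neg_zero]⟩
      have e1 := hx _ hmem1
      have e2 := hx _ hmem2
      rw [map_neg] at e2
      have e3 : J x (z - f₀ z • p - g₀ z • q) = 0 := le_antisymm e1 (by linarith)
      rw [map_sub, map_sub, map_smul, map_smul, smul_eq_mul, smul_eq_mul] at e3
      simp only [ContinuousLinearMap.add_apply, ContinuousLinearMap.smul_apply, smul_eq_mul]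
      linarith [e3]
    · rintro ⟨α, β, hβ, hx⟩ z ⟨hz1, hz2⟩
      rw [hx]
      simp only [ContinuousLinearMap.add_apply, ContinuousLinearMap.smul_apply, smul_eq_mul]
      rw [hz1, mul_zero, zero_add]
      exact mul_nonpos_of_nonneg_of_nonpos hβ hz2
  rw [← hset]
  exact hconvP

end Halfplane



set_option maxHeartbeats 1000000 in
/-- Main Theorem: In a uniformly convex, uniformly smooth real Banach space
with normalized duality map `J` (a bijection with inverse `Js = J*`), every closed convex
cone has convex polar iff `J*` maps every two-dimensional subspace of `X*` onto a
two-dimensional subspace of `X`. -/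
theorem convex_polar_iff_duality_planes {X : Type*} [NormedAddCommGroup X] [NormedSpace ℝ X]
    [CompleteSpace X] [UniformConvexSpace X] (hsm : UniformlySmooth X)
    (J : X → StrongDual ℝ X)
    (hJ : ∀ x : X, J x x = ‖x‖ ^ 2 ∧ ‖J x‖ = ‖x‖)
    (Js : StrongDual ℝ X → X)
    (hJs : Function.LeftInverse Js J ∧ Function.RightInverse Js J) :
    (∀ K : Set X, IsClosed K → Convex ℝ K → (0 : X) ∈ K →
        (∀ t : ℝ, 0 ≤ t → ∀ x ∈ K, t • x ∈ K) → Convex ℝ (conePolar K)) ↔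
    (∀ D : Submodule ℝ (StrongDual ℝ X), Module.finrank ℝ D = 2 →
        ∃ E : Submodule ℝ X, Module.finrank ℝ E = 2 ∧ Js '' (D : Set (StrongDual ℝ X)) = E) := by
  constructor
  · -- LHS → RHS
    intro hLHS D hD2
    obtain ⟨f, g, hfD, hgD, hindfg, hspanD⟩ := exists_basis_pair D hD2
    have hmemS : ∀ x : X, x ∈ Js '' (D : Set (StrongDual ℝ X)) ↔ J x ∈ D := by
      intro x
      constructor
      · rintro ⟨h, hh, rfl⟩
        rw [hJs.2 h]; exact hh
      · intro hx
        exact ⟨J x, hx, hJs.1 x⟩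
    have haddS : ∀ u v : X, J u ∈ D → J v ∈ D → J (u + v) ∈ D := by
      intro u v hu hv
      by_cases hcase : LinearIndependent ℝ ![J u, J v]
      · have hind2 : LinearIndependent ℝ ![J u - J v, J u + J v] := by
          rw [LinearIndependent.pair_iff] at hcase ⊢
          intro s t hst
          have h := hcase (s + t) (t - s) (by linear_combination (norm := module) hst)
          constructor
          · linarith [h.1, h.2]
          · linarith [h.1, h.2]
        have hconvH := halfplane_convex hsm hJ hLHS hind2
        have humem : u ∈ {x : X | ∃ α β : ℝ, 0 ≤ β ∧
            J x = α • (J u - J v) + β • (J u + J v)} :=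
          ⟨1/2, 1/2, by norm_num, by module⟩
        have hvmem : v ∈ {x : X | ∃ α β : ℝ, 0 ≤ β ∧
            J x = α • (J u - J v) + β • (J u + J v)} :=
          ⟨-(1/2), 1/2, by norm_num, by module⟩
        have hmid := hconvH humem hvmem (by norm_num : (0:ℝ) ≤ 1/2)
          (by norm_num : (0:ℝ) ≤ 1/2) (by norm_num)
        obtain ⟨α, β, hβ, hmid⟩ := hmid
        have hmD : J ((1/2 : ℝ) • u + (1/2 : ℝ) • v) ∈ D := by
          rw [hmid]
          exact D.add_mem (D.smul_mem _ (D.sub_mem hu hv)) (D.smul_mem _ (D.add_mem hu hv))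
        have h2 : u + v = (2 : ℝ) • ((1/2 : ℝ) • u + (1/2 : ℝ) • v) := by module
        rw [h2, J_smul hsm hJ]
        exact D.smul_mem _ hmD
      · rw [LinearIndependent.pair_iff] at hcase
        push_neg at hcase
        obtain ⟨s, t, hst, hne⟩ := hcase
        by_cases hu0 : J u = 0
        · have hu0' : u = 0 := by
            have h := (hJ u).2
            rw [hu0, norm_zero] at h
            exact norm_eq_zero.mp h.symm
          rw [hu0', zero_add]; exact hv
        by_cases hv0 : J v = 0
        · have hv0' : v = 0 := by
            have h := (hJ v).2
            rw [hv0, norm_zero] at h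
            exact norm_eq_zero.mp h.symm
          rw [hv0', add_zero]; exact hu
        have ht : t ≠ 0 := by
          rintro rfl
          rw [zero_smul, add_zero, smul_eq_zero] at hst
          rcases hst with h | h
          · exact hne h rfl
          · exact hu0 h
        have hJv : J v = (-(s / t)) • J u := by
          have h1 : t • J v = (-s) • J u := by linear_combination (norm := module) hst
          rw [← one_smul ℝ (J v), ← inv_mul_cancel₀ ht, mul_smul, h1, smul_smul]
          congr 1
          field_simp
        have hveq : v = (-(s / t)) • u := by
          have h1 := congrArg Js hJv
          rwa [hJs.1, Js_smul hsm hJ hJs, hJs.1] at h1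
        have h2 : u + v = (1 + -(s / t)) • u := by rw [hveq]; module
        rw [h2, J_smul hsm hJ]
        exact D.smul_mem _ hu
    set e₁ : X := Js f with he₁
    set e₂ : X := Js g with he₂
    have hJe₁ : J e₁ = f := hJs.2 f
    have hJe₂ : J e₂ = g := hJs.2 g
    have hinde : LinearIndependent ℝ ![e₁, e₂] := by
      rw [LinearIndependent.pair_iff]
      intro s t hst
      have h1 : s • e₁ = (-t) • e₂ := by linear_combination (norm := module) hst
      have h2 : Js (s • f) = Js ((-t) • g) := by
        rw [Js_smul hsm hJ hJs, Js_smul hsm hJ hJs, ← he₁, ← he₂, h1]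
      have h3 : s • f = (-t) • g := Function.LeftInverse.injective hJs.2 h2
      have h4 : s • f + t • g = 0 := by linear_combination (norm := module) h3
      exact (LinearIndependent.pair_iff.mp hindfg) s t h4
    refine ⟨Submodule.span ℝ ({e₁, e₂} : Set X), finrank_span_pair' hinde, ?_⟩
    apply Set.Subset.antisymm
    · rintro x ⟨h, hh, rfl⟩
      by_contra hxE
      have hJx : J (Js h) ∈ D := by rw [hJs.2]; exact hh
      set w : Fin 3 → ℝ × ℝ :=
        ![(f e₁, g e₁), (f e₂, g e₂), (f (Js h), g (Js h))] with hw
      have hnli : ¬ LinearIndependent ℝ w := by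
        intro hli
        have hcard := hli.fintype_card_le_finrank
        rw [Fintype.card_fin] at hcard
        have hfr2 : Module.finrank ℝ (ℝ × ℝ) = 2 := by
          rw [Module.finrank_prod, Module.finrank_self]
        omega
      obtain ⟨c, hsum, i, hi⟩ := Fintype.not_linearIndependent_iff.mp hnli
      rw [Fin.sum_univ_three] at hsum
      simp only [hw, Matrix.cons_val_zero, Matrix.cons_val_one, Matrix.head_cons,
        Matrix.cons_val_two, Matrix.tail_cons] at hsum
      have hfst := congrArg Prod.fst hsum
      have hsnd := congrArg Prod.snd hsum
      simp only [Prod.fst_add, Prod.snd_add, Prod.smul_fst, Prod.smul_snd, smul_eq_mul,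
        Prod.fst_zero, Prod.snd_zero] at hfst hsnd
      set u : X := c 0 • e₁ + c 1 • e₂ + c 2 • Js h with hu
      have hfu : f u = 0 := by
        rw [hu, map_add, map_add, map_smul, map_smul, map_smul,
          smul_eq_mul, smul_eq_mul, smul_eq_mul]
        linarith [hfst]
      have hgu : g u = 0 := by
        rw [hu, map_add, map_add, map_smul, map_smul, map_smul,
          smul_eq_mul, smul_eq_mul, smul_eq_mul]
        linarith [hsnd]
      have hu0 : u ≠ 0 := by
        intro h0
        rw [hu] at h0
        by_cases hc2 : c 2 = 0
        · rw [hc2, zero_smul, add_zero] at h0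
          have := (LinearIndependent.pair_iff.mp hinde) (c 0) (c 1) h0
          fin_cases i
          · exact hi this.1
          · exact hi this.2
          · exact hi hc2
        · apply hxE
          have h1 : c 2 • Js h = (-(c 0)) • e₁ + (-(c 1)) • e₂ := by
            linear_combination (norm := module) h0
          have h2 : Js h = ((c 2)⁻¹ * -(c 0)) • e₁ + ((c 2)⁻¹ * -(c 1)) • e₂ := by
            rw [mul_smul, mul_smul, ← smul_add, ← h1, inv_smul_smul₀ hc2]
          exact Submodule.mem_span_pair.mpr ⟨_, _, h2.symm⟩
      have huD : J u ∈ D := by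
        rw [hu]
        apply haddS
        apply haddS
        · rw [J_smul hsm hJ]
          refine D.smul_mem _ ?_
          rw [hJe₁]; exact hfD
        · rw [J_smul hsm hJ]
          refine D.smul_mem _ ?_
          rw [hJe₂]; exact hgD
        · rw [J_smul hsm hJ]
          exact D.smul_mem _ hJx
      obtain ⟨α, β, hαβ⟩ := hspanD (J u) huD
      have hnorm0 : ‖u‖ ^ 2 = 0 := by
        rw [← (hJ u).1, hαβ]
        simp only [ContinuousLinearMap.add_apply, ContinuousLinearMap.smul_apply, smul_eq_mul]
        rw [hfu, hgu]
        ring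
      exact hu0 (norm_eq_zero.mp ((pow_eq_zero_iff two_ne_zero).mp hnorm0))
    · intro x hx
      have hx' : x ∈ Submodule.span ℝ ({e₁, e₂} : Set X) := hx
      obtain ⟨α, β, hαβ⟩ := Submodule.mem_span_pair.mp hx'
      rw [hmemS, ← hαβ]
      apply haddS
      · rw [J_smul hsm hJ]
        refine D.smul_mem _ ?_
        rw [hJe₁]; exact hfD
      · rw [J_smul hsm hJ]
        refine D.smul_mem _ ?_
        rw [hJe₂]; exact hgD
  · -- RHS → LHS
    intro hRHS K hKc hKconv hK0 hKscale
    intro x hx y hy a b ha hb hab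
    rcases eq_or_lt_of_le ha with ha0 | ha0
    · have hb1 : b = 1 := by linarith
      rw [← ha0, hb1, zero_smul, zero_add, one_smul]
      exact hy
    rcases eq_or_lt_of_le hb with hb0 | hb0
    · have ha1 : a = 1 := by linarith
      rw [← hb0, ha1, zero_smul, add_zero, one_smul]
      exact hx
    have ha1 : a < 1 := by linarith
    have hb1 : b < 1 := by linarith
    rw [mem_polar_iff hsm hJ hKscale] at hx hy ⊢
    by_cases hind : LinearIndependent ℝ ![J x, J y]
    · -- main (independent) case
      obtain ⟨E, hE2, hEeq⟩ := hRHS (Submodule.span ℝ ({J x, J y} : Set (StrongDual ℝ X)))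
        (finrank_span_pair' hind)
      set D : Submodule ℝ (StrongDual ℝ X) :=
        Submodule.span ℝ ({J x, J y} : Set (StrongDual ℝ X)) with hD
      have hmemE : ∀ u : X, J u ∈ D → u ∈ E := by
        intro u hu
        have h1 : u ∈ Js '' (D : Set (StrongDual ℝ X)) := ⟨J u, hu, hJs.1 u⟩
        rw [hEeq] at h1
        exact h1
      have hDmem : ∀ u : X, u ∈ E → J u ∈ D := by
        intro u hu
        have h1 : u ∈ Js '' (D : Set (StrongDual ℝ X)) := by
          rw [hEeq]; exact hu
        obtain ⟨h, hh, hh2⟩ := h1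
        rw [← hh2, hJs.2]
        exact hh
      have hxE : x ∈ E := hmemE x (Submodule.subset_span (by simp))
      have hyE : y ∈ E := hmemE y (Submodule.subset_span (by simp))
      have hindxy : LinearIndependent ℝ ![x, y] := by
        rw [LinearIndependent.pair_iff] at hind ⊢
        intro s t hst
        by_cases ht : t = 0
        · subst ht
          refine ⟨?_, rfl⟩
          by_contra hs
          rw [zero_smul, add_zero, smul_eq_zero] at hst
          have hx0 : x = 0 := hst.resolve_left hs
          have hJx0 : J x = 0 := by rw [hx0, J_zero hJ]
          have := hind 1 0 (by rw [hJx0]; simp)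
          exact one_ne_zero this.1
        · exfalso
          have hy' : y = (-(s / t)) • x := by
            have h1 : t • y = (-s) • x := by linear_combination (norm := module) hst
            rw [← one_smul ℝ y, ← inv_mul_cancel₀ ht, mul_smul, h1, smul_smul]
            congr 1
            field_simp
          have hJy : J y = (-(s / t)) • J x := by rw [hy', J_smul hsm hJ]
          have := hind (s / t) 1 (by rw [hJy]; module)
          exact one_ne_zero this.2
      obtain ⟨p, q, hp1, hp2, hq1, hq2⟩ := exists_dual_pair hind
      set γ : ℝ → X := fun s => (1 - s) • x + s • y with hγ
      have hγE : ∀ s : ℝ, γ s ∈ E := fun s => E.add_mem (E.smul_mem _ hxE) (E.smul_mem _ hyE)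
      have hrepr : ∀ s : ℝ, J (γ s) = (J (γ s) p) • J x + (J (γ s) q) • J y := by
        intro s
        obtain ⟨α, β, hαβ⟩ := Submodule.mem_span_pair.mp (hDmem _ (hγE s))
        have hα : J (γ s) p = α := by
          rw [← hαβ]
          simp only [ContinuousLinearMap.add_apply, ContinuousLinearMap.smul_apply, smul_eq_mul]
          rw [hp1, hp2]
          ring
        have hβ : J (γ s) q = β := by
          rw [← hαβ]
          simp only [ContinuousLinearMap.add_apply, ContinuousLinearMap.smul_apply, smul_eq_mul]
          rw [hq1, hq2]
          ring
        rw [hα, hβ]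
        exact hαβ.symm
      have hγcont : Continuous γ := by
        apply Continuous.add
        · exact (continuous_const.sub continuous_id).smul continuous_const
        · exact continuous_id.smul continuous_const
      have hJγ : Continuous fun s : ℝ => J (γ s) := (J_cont hsm hJ).comp hγcont
      have hA : Continuous fun s : ℝ => J (γ s) p :=
        (ContinuousLinearMap.apply ℝ ℝ p).continuous.comp hJγ
      have hB : Continuous fun s : ℝ => J (γ s) q :=
        (ContinuousLinearMap.apply ℝ ℝ q).continuous.comp hJγ
      have hγ0 : γ 0 = x := by simp [hγ]
      have hγ1 : γ 1 = y := by simp [hγ]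
      have hnzA : ∀ s : ℝ, 0 < s → s < 1 → J (γ s) p ≠ 0 := by
        intro s hs0 hs1 hzero
        have h1 := hrepr s
        rw [hzero, zero_smul, zero_add] at h1
        have h2 : γ s = (J (γ s) q) • y := by
          have h2' := congrArg Js h1
          rwa [hJs.1, Js_smul hsm hJ hJs, hJs.1] at h2'
        have h2' : (1 - s) • x + s • y = (J (γ s) q) • y := by
          rw [← h2]
        have h3 : (1 - s) • x + (s - J (γ s) q) • y = 0 := by
          linear_combination (norm := module) h2'
        have h4 := (LinearIndependent.pair_iff.mp hindxy _ _ h3).1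
        linarith
      have hnzB : ∀ s : ℝ, 0 < s → s < 1 → J (γ s) q ≠ 0 := by
        intro s hs0 hs1 hzero
        have h1 := hrepr s
        rw [hzero, zero_smul, add_zero] at h1
        have h2 : γ s = (J (γ s) p) • x := by
          have h2' := congrArg Js h1
          rwa [hJs.1, Js_smul hsm hJ hJs, hJs.1] at h2'
        have h2' : (1 - s) • x + s • y = (J (γ s) p) • x := by
          rw [← h2]
        have h3 : (1 - s - J (γ s) p) • x + s • y = 0 := by
          linear_combination (norm := module) h2'
        have h4 := (LinearIndependent.pair_iff.mp hindxy _ _ h3).2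
        linarith
      have hAb : 0 ≤ J (γ b) p := by
        by_contra hneg
        push_neg at hneg
        have hsub := intermediate_value_Icc' hb (Continuous.continuousOn hA)
        have h0mem : (0 : ℝ) ∈ Set.Icc (J (γ b) p) (J (γ 0) p) := by
          constructor
          · exact hneg.le
          · rw [hγ0, hp1]
            norm_num
        obtain ⟨s₁, hs₁mem, hs₁⟩ := hsub h0mem
        have hs₁ne : s₁ ≠ 0 := by
          intro h
          rw [h] at hs₁
          simp only [hγ0, hp1] at hs₁
          exact one_ne_zero hs₁
        exact hnzA s₁ (lt_of_le_of_ne hs₁mem.1 (Ne.symm hs₁ne))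
          (lt_of_le_of_lt hs₁mem.2 hb1) hs₁
      have hBb : 0 ≤ J (γ b) q := by
        by_contra hneg
        push_neg at hneg
        have hsub := intermediate_value_Icc hb1.le (Continuous.continuousOn hB)
        have h0mem : (0 : ℝ) ∈ Set.Icc (J (γ b) q) (J (γ 1) q) := by
          constructor
          · exact hneg.le
          · rw [hγ1, hq2]
            norm_num
        obtain ⟨s₂, hs₂mem, hs₂⟩ := hsub h0mem
        have hs₂ne : s₂ ≠ 1 := by
          intro h
          rw [h] at hs₂
          simp only [hγ1, hq2] at hs₂
          exact one_ne_zero hs₂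
        exact hnzB s₂ (lt_of_lt_of_le hb0 hs₂mem.1)
          (lt_of_le_of_ne hs₂mem.2 hs₂ne) hs₂
      intro z hz
      have hwγ : γ b = a • x + b • y := by
        simp only [hγ]
        rw [show (1 : ℝ) - b = a by linarith]
      rw [← hwγ, hrepr b]
      simp only [ContinuousLinearMap.add_apply, ContinuousLinearMap.smul_apply, smul_eq_mul]
      exact add_nonpos (mul_nonpos_of_nonneg_of_nonpos hAb (hx z hz))
        (mul_nonpos_of_nonneg_of_nonpos hBb (hy z hz))
    · -- dependent case
      rw [LinearIndependent.pair_iff] at hind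
      push_neg at hind
      obtain ⟨s, t, hst, hne⟩ := hind
      by_cases hx0 : J x = 0
      · have hx0' : x = 0 := by
          have h := (hJ x).2
          rw [hx0, norm_zero] at h
          exact norm_eq_zero.mp h.symm
        intro z hz
        rw [hx0', smul_zero, zero_add, J_smul hsm hJ]
        simp only [ContinuousLinearMap.smul_apply, smul_eq_mul]
        exact mul_nonpos_of_nonneg_of_nonpos hb (hy z hz)
      by_cases hy0 : J y = 0
      · have hy0' : y = 0 := by
          have h := (hJ y).2
          rw [hy0, norm_zero] at h
          exact norm_eq_zero.mp h.symm
        intro z hz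
        rw [hy0', smul_zero, add_zero, J_smul hsm hJ]
        simp only [ContinuousLinearMap.smul_apply, smul_eq_mul]
        exact mul_nonpos_of_nonneg_of_nonpos ha (hx z hz)
      have ht : t ≠ 0 := by
        rintro rfl
        rw [zero_smul, add_zero, smul_eq_zero] at hst
        rcases hst with h | h
        · exact hne h rfl
        · exact hx0 h
      have hJy : J y = (-(s / t)) • J x := by
        have h1 : t • J y = (-s) • J x := by linear_combination (norm := module) hst
        rw [← one_smul ℝ (J y), ← inv_mul_cancel₀ ht, mul_smul, h1, smul_smul]
        congr 1
        field_simp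
      have hyx : y = (-(s / t)) • x := by
        have h1 := congrArg Js hJy
        rwa [hJs.1, Js_smul hsm hJ hJs, hJs.1] at h1
      intro z hz
      have hw : a • x + b • y = (a + b * -(s / t)) • x := by
        rw [hyx]
        module
      rw [hw, J_smul hsm hJ]
      simp only [ContinuousLinearMap.smul_apply, smul_eq_mul]
      have h1 := hx z hz
      have h2 := hy z hz
      have h2' : -(s / t) * J x z ≤ 0 := by
        rw [hJy] at h2
        simpa using h2
      by_cases hcge : 0 ≤ a + b * -(s / t)
      · exact mul_nonpos_of_nonneg_of_nonpos hcge h1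
      · push_neg at hcge
        have hc0 : -(s / t) < 0 := by nlinarith
        have h3 : 0 ≤ J x z := by nlinarith [h2']
        have h4 : J x z = 0 := le_antisymm h1 h3
        rw [h4, mul_zero]
end

section
/- Let X be a real normed space, and let K ⊆ X be a cone (closed under nonnegative scalar multiplication) such that K ≠ X and K is maximal among cones different from X (no cone other than X properly contains K). If K is closed and convex, then K is a closed halfspace {x : f(x) ≤ 0} for some nonzero f ∈ X*. -/
/-- In a real normed space, a closed convex hypercone (a cone `K ≠ X` maximal
among cones different from `X`) is a closed halfspace `{x | f x ≤ 0}` for some nonzero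
`f ∈ X*`. -/
theorem hypercone_is_halfspace {X : Type*} [NormedAddCommGroup X] [NormedSpace ℝ X]
    (K : Set X) (hne : K.Nonempty)
    (hcone : ∀ t : ℝ, 0 ≤ t → ∀ x ∈ K, t • x ∈ K)
    (hKne : K ≠ Set.univ)
    (hmax : ∀ C : Set X, (∀ t : ℝ, 0 ≤ t → ∀ x ∈ C, t • x ∈ C) → K ⊆ C →
      C ≠ Set.univ → C = K)
    (hcl : IsClosed K) (hconv : Convex ℝ K) :
    ∃ f : StrongDual ℝ X, f ≠ 0 ∧ K = {x : X | f x ≤ 0} := by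
  -- 0 ∈ K
  obtain ⟨a, ha⟩ := hne
  have h0 : (0 : X) ∈ K := by
    have := hcone 0 le_rfl a ha
    simpa using this
  -- pick x₀ ∉ K
  obtain ⟨x₀, hx₀⟩ : ∃ x, x ∉ K := by
    by_contra h
    push_neg at h
    exact hKne (Set.eq_univ_of_forall h)
  obtain ⟨f, u, hfs, hfx⟩ := geometric_hahn_banach_closed_point hconv hcl hx₀
  have hu : 0 < u := by simpa using hfs 0 h0
  -- f ≤ 0 on K
  have hK0 : ∀ x ∈ K, f x ≤ 0 := by
    intro x hx
    by_contra h
    push_neg at h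
    obtain ⟨t, ht0, ht⟩ : ∃ t : ℝ, 0 ≤ t ∧ u < t * f x := by
      refine ⟨(u + 1) / f x, by positivity, ?_⟩
      rw [div_mul_cancel₀ _ h.ne']
      linarith
    have := hfs (t • x) (hcone t ht0 x hx)
    rw [map_smul, smul_eq_mul] at this
    linarith
  have hfx0 : 0 < f x₀ := hu.trans hfx
  refine ⟨f, ?_, ?_⟩
  · intro h
    rw [h] at hfx0
    simp at hfx0
  · have := hmax {x : X | f x ≤ 0}
      (fun t ht x hx => by
        simp only [Set.mem_setOf_eq, map_smul, smul_eq_mul] at *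
        exact mul_nonpos_of_nonneg_of_nonpos ht hx)
      hK0
      (by
        intro h
        have : x₀ ∈ {x : X | f x ≤ 0} := h.symm ▸ Set.mem_univ x₀
        simp only [Set.mem_setOf_eq] at this
        linarith)
    exact this.symm
end
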